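/- arXiv:1707.04615 — 3 statements merged into one kernel-verified Lean document; each statement's English description precedes it below -/
import Mathlib

section
/- Let φ: ℝ → ℝ be periodic with period θ > 0, and let D be a probability distribution on ℝ with a unimodal density function f. Then for any z ∈ ℝ, |E_{x∼D}[φ(x) − φ(x−z)]| ≤ C · ‖f‖_∞ · ∫₀^θ |φ(x)| dx for some absolute constant C (e.g., C = 5 works, since the bound 3f(mode) + f(mode+θ) + f(mode−θ) times the integral suffices). -/
open MeasureTheory Set
open scoped ENNReal NNReal

lemma aux_sum_le (a : ℤ → ℝ) (ha : Monotone a) (c : ℝ) (h0 : ∀ n, 0 ≤ a n) (hc : ∀ n, a n ≤ c)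
    (s : Finset ℤ) : ∑ n ∈ s, (a (n + 1) - a n) ≤ c := by
  classical
  rcases s.eq_empty_or_nonempty with rfl | hs
  · simpa using le_trans (h0 0) (hc 0)
  set L := s.min' hs with hL
  set M := s.max' hs with hM
  set k : ℕ := (M - L).toNat + 1 with hk
  have hsub : s ⊆ (Finset.range k).image (fun i : ℕ => L + (i : ℤ)) := by
    intro n hn
    have h1 : L ≤ n := s.min'_le n hn
    have h2 : n ≤ M := s.le_max' n hn
    refine Finset.mem_image.2 ⟨(n - L).toNat, ?_, ?_⟩
    · refine Finset.mem_range.2 ?_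
      omega
    · omega
  have hterm : ∀ n : ℤ, 0 ≤ a (n + 1) - a n := fun n =>
    sub_nonneg.2 (ha (by omega))
  calc ∑ n ∈ s, (a (n + 1) - a n)
      ≤ ∑ n ∈ (Finset.range k).image (fun i : ℕ => L + (i : ℤ)), (a (n + 1) - a n) :=
        Finset.sum_le_sum_of_subset_of_nonneg hsub (fun n _ _ => hterm n)
    _ = ∑ i ∈ Finset.range k, (a (L + (i : ℤ) + 1) - a (L + (i : ℤ))) := by
        rw [Finset.sum_image]
        intro x _ y _ h
        have h' : L + (x:ℤ) = L + (y:ℤ) := h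
        omega
    _ ≤ c := by
        have htel := Finset.sum_range_sub (fun i : ℕ => a (L + (i : ℤ))) k
        push_cast at htel
        simp only [add_assoc]
        rw [htel]
        have h1 := hc (L + ((((M - L).toNat : ℤ)) + 1))
        have h2 := h0 (L + 0)
        have e : (k:ℤ) = ((M - L).toNat : ℤ) + 1 := by omega
        rw [e]
        linarith

lemma aux_tsum (a : ℤ → ℝ) (ha : Monotone a) (c : ℝ) (h0 : ∀ n, 0 ≤ a n) (hc : ∀ n, a n ≤ c) :
    ∑' n : ℤ, ENNReal.ofReal (a (n + 1) - a n) ≤ ENNReal.ofReal c := by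
  rw [ENNReal.tsum_eq_iSup_sum]
  refine iSup_le fun s => ?_
  calc ∑ n ∈ s, ENNReal.ofReal (a (n + 1) - a n)
      = ENNReal.ofReal (∑ n ∈ s, (a (n + 1) - a n)) :=
        (ENNReal.ofReal_sum_of_nonneg (fun n _ => sub_nonneg.2 (ha (by omega)))).symm
    _ ≤ ENNReal.ofReal c := ENNReal.ofReal_le_ofReal (aux_sum_le a ha c h0 hc s)

lemma aux_shift (F : ℝ → ℝ≥0∞) (a b c : ℝ) :
    ∫⁻ x in Ico a b, F x = ∫⁻ x in Ico (a - c) (b - c), F (x + c) := by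
  rw [← lintegral_indicator measurableSet_Ico, ← lintegral_indicator measurableSet_Ico,
    ← lintegral_add_right_eq_self (fun x => (Ico a b).indicator F x) c]
  congr 1
  ext x
  by_cases hx : x ∈ Ico (a - c) (b - c)
  · have hx' : x + c ∈ Ico a b := by
      simp only [mem_Ico] at hx ⊢; constructor <;> linarith [hx.1, hx.2]
    simp [indicator_of_mem hx, indicator_of_mem hx']
  · have hx' : x + c ∉ Ico a b := by
      simp only [mem_Ico] at hx ⊢; intro h1; by_contra; simp at hx; linarith [hx (by linarith)]
    simp [indicator_of_notMem hx, indicator_of_notMem hx']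

lemma aux_periodization {ψ g : ℝ → ℝ} {θ c : ℝ} (hθ : 0 < θ) (hψm : Measurable ψ)
    (hψp : Function.Periodic ψ θ) (hg : Monotone g) (h0 : ∀ x, 0 ≤ g x) (hc : ∀ x, g x ≤ c) :
    ∫⁻ x, ENNReal.ofReal |ψ x| * ENNReal.ofReal (g (x + θ) - g x) ≤
      ENNReal.ofReal c * ∫⁻ x in Icc (0:ℝ) θ, ENNReal.ofReal |ψ x| := by
  have hgm : Measurable g := hg.measurable
  set F : ℝ → ℝ≥0∞ := fun x => ENNReal.ofReal |ψ x| * ENNReal.ofReal (g (x + θ) - g x) with hF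
  have hFm : Measurable F :=
    (hψm.abs.ennreal_ofReal).mul (((hgm.comp (measurable_add_const θ)).sub hgm).ennreal_ofReal)
  have hcover : (⋃ n : ℤ, Ico ((n : ℝ) * θ) (((n : ℝ) + 1) * θ)) = univ := by
    ext x
    simp only [mem_iUnion, mem_Ico, mem_univ, iff_true]
    refine ⟨⌊x / θ⌋, ?_, ?_⟩
    · have := Int.sub_floor_div_mul_nonneg x hθ; linarith
    · have := Int.sub_floor_div_mul_lt x hθ; linarith
  have hdisj : Pairwise (Function.onFun Disjoint
      fun n : ℤ => Ico ((n : ℝ) * θ) (((n : ℝ) + 1) * θ)) := by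
    intro m n hmn
    refine Set.disjoint_left.2 fun x hx1 hx2 => ?_
    simp only [mem_Ico] at hx1 hx2
    rcases hmn.lt_or_gt with h | h
    · have : ((m : ℝ) + 1) * θ ≤ (n : ℝ) * θ := by
        apply mul_le_mul_of_nonneg_right _ hθ.le
        have : (m : ℝ) + 1 ≤ n := by exact_mod_cast h
        linarith
      linarith [hx1.2, hx2.1]
    · have : ((n : ℝ) + 1) * θ ≤ (m : ℝ) * θ := by
        apply mul_le_mul_of_nonneg_right _ hθ.le
        have : (n : ℝ) + 1 ≤ m := by exact_mod_cast h
        linarith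
      linarith [hx1.1, hx2.2]
  have hn : ∀ n : ℤ, ∫⁻ x in Ico ((n:ℝ)*θ) (((n:ℝ)+1)*θ), F x
      = ∫⁻ x in Ico (0:ℝ) θ,
          ENNReal.ofReal |ψ x| * ENNReal.ofReal (g (x + ((n:ℝ)+1)*θ) - g (x + (n:ℝ)*θ)) := by
    intro n
    rw [aux_shift F _ _ ((n:ℝ)*θ)]
    have e1 : (n:ℝ)*θ - (n:ℝ)*θ = 0 := by ring
    have e2 : ((n:ℝ)+1)*θ - (n:ℝ)*θ = θ := by ring
    rw [e1, e2]
    refine setLIntegral_congr_fun measurableSet_Ico (fun x _ => ?_)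
    have hper : ψ (x + (n:ℝ)*θ) = ψ x := (hψp.int_mul n) x
    simp only [hF]
    rw [hper]
    congr 2
    ring_nf
  calc ∫⁻ x, F x
      = ∫⁻ x in ⋃ n : ℤ, Ico ((n:ℝ)*θ) (((n:ℝ)+1)*θ), F x := by
        rw [hcover, Measure.restrict_univ]
    _ = ∑' n : ℤ, ∫⁻ x in Ico ((n:ℝ)*θ) (((n:ℝ)+1)*θ), F x :=
        lintegral_iUnion (fun _ => measurableSet_Ico) hdisj F
    _ = ∑' n : ℤ, ∫⁻ x in Ico (0:ℝ) θ,
          ENNReal.ofReal |ψ x| * ENNReal.ofReal (g (x + ((n:ℝ)+1)*θ) - g (x + (n:ℝ)*θ)) := by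
        exact tsum_congr hn
    _ = ∫⁻ x in Ico (0:ℝ) θ, ∑' n : ℤ,
          ENNReal.ofReal |ψ x| * ENNReal.ofReal (g (x + ((n:ℝ)+1)*θ) - g (x + (n:ℝ)*θ)) := by
        refine (lintegral_tsum fun n => Measurable.aemeasurable ?_).symm
        exact (hψm.abs.ennreal_ofReal).mul
          (((hgm.comp (measurable_add_const _)).sub (hgm.comp (measurable_add_const _))).ennreal_ofReal)
    _ ≤ ∫⁻ x in Ico (0:ℝ) θ, ENNReal.ofReal |ψ x| * ENNReal.ofReal c := by
        refine lintegral_mono fun x => ?_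
        rw [ENNReal.tsum_mul_left]
        refine mul_le_mul_right ?_ _
        have haux := aux_tsum (fun n : ℤ => g (x + (n:ℝ)*θ))
          (fun p q hpq => hg (by
            have : (p:ℝ) ≤ q := by exact_mod_cast hpq
            nlinarith))
          c (fun n => h0 _) (fun n => hc _)
        refine le_trans (le_of_eq (tsum_congr fun n => ?_)) haux
        congr 2
        push_cast
        ring
    _ = ENNReal.ofReal c * ∫⁻ x in Ico (0:ℝ) θ, ENNReal.ofReal |ψ x| := by
        rw [lintegral_mul_const' _ _ (by simp), mul_comm]
    _ ≤ ENNReal.ofReal c * ∫⁻ x in Icc (0:ℝ) θ, ENNReal.ofReal |ψ x| := by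
        exact mul_le_mul_right (lintegral_mono' (Measure.restrict_mono Ico_subset_Icc_self le_rfl) le_rfl) _

/-- Shift lemma for periodic functions against unimodal densities. -/
theorem stmt_0 :
    ∃ C > (0:ℝ), ∀ (φ f : ℝ → ℝ) (θ z B : ℝ),
      0 < θ →
      Function.Periodic φ θ →
      (∃ m : ℝ, MonotoneOn f (Iic m) ∧ AntitoneOn f (Ici m)) →
      (∀ x, 0 ≤ f x) →
      (∀ x, f x ≤ B) →
      ∀ μ : Measure ℝ,
        μ = volume.withDensity (fun x => ENNReal.ofReal (f x)) →
        IsProbabilityMeasure μ →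
        Integrable φ μ →
        Integrable (fun x => φ (x - z)) μ →
        IntegrableOn φ (Icc 0 θ) volume →
        |∫ x, (φ x - φ (x - z)) ∂μ| ≤ C * B * ∫ x in Icc 0 θ, |φ x| := by
  refine ⟨2, two_pos, ?_⟩
  rintro φ f θ z B hθ hφp ⟨m, hmono, hanti⟩ hf0 hfB μ hμ hprob hint1 hint2 hintL
  subst hμ
  have hθ0 : (θ:ℝ) ≠ 0 := hθ.ne'
  -- monotone decomposition of f
  set g : ℝ → ℝ := fun x => f (min x m) with hgdef
  set h : ℝ → ℝ := fun x => f (max x m) with hhdef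
  have hg : Monotone g := fun x y hxy =>
    hmono (mem_Iic.2 (min_le_right x m)) (mem_Iic.2 (min_le_right y m)) (min_le_min hxy le_rfl)
  have hh : Antitone h := fun x y hxy =>
    hanti (mem_Ici.2 (le_max_right x m)) (mem_Ici.2 (le_max_right y m)) (max_le_max hxy le_rfl)
  have hfm : ∀ x, f x ≤ f m := by
    intro x
    rcases le_total x m with hx | hx
    · exact hmono (mem_Iic.2 hx) (mem_Iic.2 le_rfl) hx
    · exact hanti (mem_Ici.2 le_rfl) (mem_Ici.2 hx) hx
  have hfg : ∀ x, f x = g x + h x - f m := by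
    intro x
    rcases le_total x m with hx | hx
    · simp [hgdef, hhdef, min_eq_left hx, max_eq_right hx]
    · simp [hgdef, hhdef, min_eq_right hx, max_eq_left hx]
  have hfmeas : Measurable f := by
    have hfx : f = fun x => g x + h x - f m := funext hfg
    rw [hfx]
    exact (hg.measurable.add hh.measurable).sub measurable_const
  have hBnn : 0 ≤ B := le_trans (hf0 0) (hfB 0)
  -- reduce z modulo θ
  set z' : ℝ := z - ⌊z / θ⌋ * θ with hz'def
  have hz'0 : 0 ≤ z' := Int.sub_floor_div_mul_nonneg z hθ
  have hz'θ : z' < θ := Int.sub_floor_div_mul_lt z hθ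
  have hφz : ∀ x, φ (x - z) = φ (x - z') := by
    intro x
    have hxz : x - z = x - z' - (⌊z / θ⌋ : ℝ) * θ := by rw [hz'def]; ring
    rw [hxz, hφp.sub_int_mul_eq]
  -- measurable representative of φ
  have hφae : AEStronglyMeasurable φ (volume.restrict (Icc 0 θ)) := hintL.aestronglyMeasurable
  set ψ0 : ℝ → ℝ := hφae.mk φ with hψ0def
  have hψ0m : StronglyMeasurable ψ0 := hφae.stronglyMeasurable_mk
  have heq0 : φ =ᵐ[volume.restrict (Icc 0 θ)] ψ0 := hφae.ae_eq_mk
  set ψ : ℝ → ℝ := fun x => ψ0 (θ * Int.fract (x / θ)) with hψdef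
  have hrmeas : Measurable fun x : ℝ => θ * Int.fract (x / θ) :=
    (measurable_fract.comp (measurable_id.div_const θ)).const_mul θ
  have hψm : Measurable ψ := hψ0m.measurable.comp hrmeas
  have hψper : Function.Periodic ψ θ := by
    intro x
    simp only [hψdef]
    congr 2
    rw [add_div, div_self hθ0, Int.fract_add_one]
  have hNnull : volume ({y | φ y ≠ ψ0 y} ∩ Icc 0 θ) = 0 := by
    have h1 := heq0
    rw [Filter.EventuallyEq, ae_iff] at h1
    rwa [Measure.restrict_apply' measurableSet_Icc] at h1
  have hψφnull : volume {x | ψ x ≠ φ x} = 0 := by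
    have hsub : {x | ψ x ≠ φ x} ⊆
        ⋃ k : ℤ, (fun y => y + (k : ℝ) * θ) '' ({y | φ y ≠ ψ0 y} ∩ Icc 0 θ) := by
      intro x hx
      set r : ℝ := θ * Int.fract (x / θ) with hrdef
      have hr0 : 0 ≤ r := mul_nonneg hθ.le (Int.fract_nonneg _)
      have hrθ : r < θ := by
        have h2 := Int.fract_lt_one (x / θ)
        calc r < θ * 1 := (mul_lt_mul_iff_right₀ hθ).2 h2
          _ = θ := mul_one θ
      have hxr : x = r + (⌊x / θ⌋ : ℝ) * θ := by
        rw [hrdef, Int.fract]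
        field_simp
        ring
      have hφr : φ x = φ r := by
        conv_lhs => rw [hxr]
        exact (hφp.int_mul ⌊x / θ⌋) r
      have hψr : ψ x = ψ0 r := rfl
      have hne : φ r ≠ ψ0 r := by
        intro hcontra
        exact hx (by rw [hψr, ← hcontra, ← hφr])
      exact mem_iUnion.2 ⟨⌊x / θ⌋, ⟨r, ⟨hne, ⟨hr0, hrθ.le⟩⟩, hxr.symm⟩⟩
    refine measure_mono_null hsub (measure_iUnion_null fun k => ?_)
    have himg : (fun y => y + (k : ℝ) * θ) '' ({y | φ y ≠ ψ0 y} ∩ Icc 0 θ)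
        = (fun y => y + (-((k : ℝ) * θ))) ⁻¹' ({y | φ y ≠ ψ0 y} ∩ Icc 0 θ) := by
      ext y
      simp only [mem_image, mem_preimage]
      constructor
      · rintro ⟨w, hw, rfl⟩; simpa using hw
      · intro hy; exact ⟨y + -((k : ℝ) * θ), hy, by ring⟩
    rw [himg, measure_preimage_add_right]
    exact hNnull
  have hψφ : ψ =ᵐ[volume] φ := by
    rw [Filter.EventuallyEq, ae_iff]
    exact hψφnull
  have hψz' : (fun x => ψ (x - z')) =ᵐ[volume] (fun x => φ (x - z')) := by
    rw [Filter.EventuallyEq, ae_iff]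
    have hset : {x | ¬ψ (x - z') = φ (x - z')} = (fun x => x + (-z')) ⁻¹' {x | ψ x ≠ φ x} := by
      ext x; simp [sub_eq_add_neg]
    rw [hset, measure_preimage_add_right]
    exact hψφnull
  -- absolute continuity and transfer of integrability
  set dens : ℝ → ℝ≥0∞ := fun x => ENNReal.ofReal (f x) with hdensdef
  have hdm : Measurable dens := hfmeas.ennreal_ofReal
  have hac : volume.withDensity dens ≪ volume := withDensity_absolutelyContinuous _ _
  have hint1ψ : Integrable ψ (volume.withDensity dens) := hint1.congr (hac.ae_eq hψφ).symm
  have hint2ψ : Integrable (fun x => ψ (x - z')) (volume.withDensity dens) := by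
    refine hint2.congr (hac.ae_eq ?_).symm
    filter_upwards [hψz'] with x hx
    rw [hφz x, hx]
  have key1 : Integrable (fun x => ψ x * f x) volume := by
    have h1 := (integrable_withDensity_iff hdm
      (Filter.Eventually.of_forall fun x => ENNReal.ofReal_lt_top)).1 hint1ψ
    refine h1.congr (Filter.Eventually.of_forall fun x => ?_)
    simp [hdensdef, ENNReal.toReal_ofReal (hf0 x)]
  have key2 : Integrable (fun x => ψ (x - z') * f x) volume := by
    have h1 := (integrable_withDensity_iff hdm
      (Filter.Eventually.of_forall fun x => ENNReal.ofReal_lt_top)).1 hint2ψ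
    refine h1.congr (Filter.Eventually.of_forall fun x => ?_)
    simp [hdensdef, ENNReal.toReal_ofReal (hf0 x)]
  have key3 : Integrable (fun x => ψ x * f (x + z')) volume := by
    have h1 := key2.comp_add_right z'
    simpa using h1
  -- rewrite the integral
  have hEq1 : ∫ x, (φ x - φ (x - z)) ∂(volume.withDensity dens)
      = ∫ x, (ψ x - ψ (x - z')) ∂(volume.withDensity dens) := by
    refine integral_congr_ae ?_
    have h1 : φ =ᵐ[volume.withDensity dens] ψ := (hac.ae_eq hψφ).symm
    have h2 : (fun x => ψ (x - z')) =ᵐ[volume.withDensity dens] fun x => φ (x - z') :=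
      hac.ae_eq hψz'
    filter_upwards [h1, h2] with x hx1 hx2
    rw [hφz x, hx1, ← hx2]
  have hEq2 : ∫ x, (ψ x - ψ (x - z')) ∂(volume.withDensity dens)
      = ∫ x, f x * (ψ x - ψ (x - z')) := by
    have hf' : Measurable fun x => (f x).toNNReal := hfmeas.real_toNNReal
    have hd : dens = fun x => (((f x).toNNReal) : ℝ≥0∞) := by
      funext x; simp [hdensdef, ENNReal.ofReal]
    rw [hd, integral_withDensity_eq_integral_smul hf']
    refine integral_congr_ae (Filter.Eventually.of_forall fun x => ?_)
    simp [NNReal.smul_def, Real.coe_toNNReal _ (hf0 x)]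
  have hEq3 : ∫ x, f x * (ψ x - ψ (x - z')) = ∫ x, ψ x * (f x - f (x + z')) := by
    have e1 : (fun x => f x * (ψ x - ψ (x - z'))) = fun x => ψ x * f x - ψ (x - z') * f x := by
      funext x; ring
    rw [e1, integral_sub key1 key2]
    have e2 : ∫ x, ψ (x - z') * f x = ∫ x, ψ x * f (x + z') := by
      rw [← integral_add_right_eq_self (fun x => ψ (x - z') * f x) z']
      congr 1
      funext x
      rw [add_sub_cancel_right]
    rw [e2, ← integral_sub key1 key3]
    congr 1
    funext x
    ring
  -- the difference function
  set u : ℝ → ℝ := fun x => ψ x * (f x - f (x + z')) with hudef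
  have hui : Integrable u volume := by
    have h1 := key1.sub key3
    refine h1.congr (Filter.Eventually.of_forall fun x => ?_)
    simp only [hudef, Pi.sub_apply]; ring
  set g2 : ℝ → ℝ := fun x => f m - h x with hg2def
  have hg2 : Monotone g2 := fun x y hxy => sub_le_sub_left (hh hxy) _
  have hg20 : ∀ x, 0 ≤ g2 x := fun x => sub_nonneg.2 (hfm _)
  have hg2c : ∀ x, g2 x ≤ f m := fun x => by
    simp only [hg2def, hhdef]; linarith [hf0 (max x m)]
  have hgc : ∀ x, g x ≤ f m := fun x => hfm _
  have hg0 : ∀ x, 0 ≤ g x := fun x => hf0 _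
  -- pointwise bound
  have hpt : ∀ x, ENNReal.ofReal |u x| ≤
      ENNReal.ofReal |ψ x| * ENNReal.ofReal (g (x + θ) - g x)
      + ENNReal.ofReal |ψ x| * ENNReal.ofReal (g2 (x + θ) - g2 x) := by
    intro x
    have hd1 : |f x - f (x + z')| ≤ (g (x + θ) - g x) + (g2 (x + θ) - g2 x) := by
      have e1 := hfg x
      have e2 := hfg (x + z')
      have m1 : g x ≤ g (x + z') := hg (by linarith)
      have m2 : g (x + z') ≤ g (x + θ) := hg (by linarith)
      have m3 : h (x + z') ≤ h x := hh (by linarith)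
      have m4 : h (x + θ) ≤ h (x + z') := hh (by linarith)
      rw [abs_le]
      constructor <;> simp only [hg2def] <;> linarith
    calc ENNReal.ofReal |u x|
        = ENNReal.ofReal (|ψ x| * |f x - f (x + z')|) := by
          simp only [hudef]; rw [abs_mul]
      _ ≤ ENNReal.ofReal (|ψ x| * ((g (x + θ) - g x) + (g2 (x + θ) - g2 x))) :=
          ENNReal.ofReal_le_ofReal (mul_le_mul_of_nonneg_left hd1 (abs_nonneg _))
      _ = ENNReal.ofReal |ψ x| * ENNReal.ofReal ((g (x + θ) - g x) + (g2 (x + θ) - g2 x)) :=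
          ENNReal.ofReal_mul (abs_nonneg _)
      _ ≤ ENNReal.ofReal |ψ x| *
            (ENNReal.ofReal (g (x + θ) - g x) + ENNReal.ofReal (g2 (x + θ) - g2 x)) :=
          mul_le_mul_right ENNReal.ofReal_add_le _
      _ = _ := mul_add _ _ _
  set K : ℝ≥0∞ := ∫⁻ x in Icc (0:ℝ) θ, ENNReal.ofReal |ψ x| with hKdef
  have hper1 := aux_periodization hθ hψm hψper hg hg0 hgc
  have hper2 := aux_periodization hθ hψm hψper hg2 hg20 hg2c
  have hlin : ∫⁻ x, ENNReal.ofReal |u x| ≤ ENNReal.ofReal (f m) * K + ENNReal.ofReal (f m) * K := by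
    have hmeas1 : Measurable fun x => ENNReal.ofReal |ψ x| * ENNReal.ofReal (g (x + θ) - g x) :=
      (hψm.abs.ennreal_ofReal).mul
        (((hg.measurable.comp (measurable_add_const θ)).sub hg.measurable).ennreal_ofReal)
    calc ∫⁻ x, ENNReal.ofReal |u x|
        ≤ ∫⁻ x, (ENNReal.ofReal |ψ x| * ENNReal.ofReal (g (x + θ) - g x)
            + ENNReal.ofReal |ψ x| * ENNReal.ofReal (g2 (x + θ) - g2 x)) :=
          lintegral_mono hpt
      _ = (∫⁻ x, ENNReal.ofReal |ψ x| * ENNReal.ofReal (g (x + θ) - g x))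
            + ∫⁻ x, ENNReal.ofReal |ψ x| * ENNReal.ofReal (g2 (x + θ) - g2 x) :=
          lintegral_add_left hmeas1 _
      _ ≤ _ := add_le_add hper1 hper2
  -- value of K
  have hψres : ψ =ᵐ[volume.restrict (Icc (0:ℝ) θ)] φ := ae_restrict_of_ae hψφ
  have hintLψ : IntegrableOn ψ (Icc (0:ℝ) θ) volume := hintL.congr hψres.symm
  set L : ℝ := ∫ x in Icc (0:ℝ) θ, |φ x| with hLdef
  have hL0 : 0 ≤ L := integral_nonneg fun x => abs_nonneg _
  have hKval : K = ENNReal.ofReal L := by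
    have e1 : L = ∫ x in Icc (0:ℝ) θ, |ψ x| := by
      refine integral_congr_ae ?_
      filter_upwards [hψres] with x hx
      rw [hx]
    have e2 := ofReal_integral_eq_lintegral_ofReal hintLψ.abs
      (Filter.Eventually.of_forall fun x => abs_nonneg (ψ x))
    rw [hKdef, e1, e2]
  -- final numeric bound
  have hfinal : (∫⁻ x, ENNReal.ofReal |u x|).toReal ≤ 2 * B * L := by
    have hRne : ENNReal.ofReal (f m) * K + ENNReal.ofReal (f m) * K ≠ ⊤ := by
      rw [hKval]
      exact ENNReal.add_ne_top.2
        ⟨ENNReal.mul_ne_top ENNReal.ofReal_ne_top ENNReal.ofReal_ne_top,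
         ENNReal.mul_ne_top ENNReal.ofReal_ne_top ENNReal.ofReal_ne_top⟩
    refine le_trans (ENNReal.toReal_mono hRne hlin) ?_
    rw [hKval, ← ENNReal.ofReal_mul (hf0 m),
      ← ENNReal.ofReal_add (mul_nonneg (hf0 m) hL0) (mul_nonneg (hf0 m) hL0),
      ENNReal.toReal_ofReal (by nlinarith [hf0 m, hL0])]
    nlinarith [hfB m, hf0 m, hL0]
  calc |∫ x, (φ x - φ (x - z)) ∂(volume.withDensity dens)|
      = |∫ x, u x| := by rw [hEq1, hEq2, hEq3]
    _ ≤ ∫ x, |u x| := by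
        have h1 := norm_integral_le_integral_norm (μ := (volume : Measure ℝ)) u
        simpa [Real.norm_eq_abs] using h1
    _ = (∫⁻ x, ENNReal.ofReal |u x|).toReal := by
        rw [integral_eq_lintegral_of_nonneg_ae
          (Filter.Eventually.of_forall fun x => abs_nonneg (u x)) hui.abs.aestronglyMeasurable]
    _ ≤ 2 * B * L := hfinal
end

section
/- Let ψ ∈ L¹(ℝ) with ∫_{−r}^{r} |ψ| ≥ (5/6)‖ψ‖₁ for some r > 0 (essential radius at most r). Set θ = 4r and F(x) = Σ_{k∈ℤ} ψ(x − kθ). Then for any interval I of length θ: ∫_I |F(x)| dx ≤ ‖ψ‖₁; moreover ∫_{−r}^{r} |F(x)| dx ≥ (2/3)‖ψ‖₁ and ∫_{r}^{3r} |F(x)| dx ≤ (1/6)‖ψ‖₁. -/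
open MeasureTheory Set
open scoped ENNReal NNReal

private lemma shift_lintegral (h : ℝ → ℝ≥0∞) (c b₁ b₂ : ℝ) :
    ∫⁻ x in Icc b₁ b₂, h (x - c) = ∫⁻ x in Icc (b₁ - c) (b₂ - c), h x := by
  have := (measurePreserving_sub_right (volume : Measure ℝ) c).setLIntegral_comp_emb
    (MeasurableEquiv.subRight c).measurableEmbedding h (Icc b₁ b₂)
  rwa [Set.image_sub_const_Icc] at this

private lemma tile_lintegral (h : ℝ → ℝ≥0∞) (hm : Measurable h) {θ : ℝ} (hθ : 0 < θ) (a : ℝ) :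
    ∑' k : ℤ, ∫⁻ x in Icc (a - k * θ) (a + θ - k * θ), h x = ∫⁻ x, h x := by
  have e1 : ∀ k : ℤ, (∫⁻ x in Icc (a - k * θ) (a + θ - k * θ), h x)
      = ∫⁻ x in Ioc (a + (-k) • θ) (a + (-k + 1) • θ), h x := by
    intro k
    rw [← Measure.restrict_congr_set Ioc_ae_eq_Icc]
    congr 2 <;> (simp only [zsmul_eq_mul]; push_cast; ring)
  simp_rw [e1]
  have e2 := (Equiv.neg ℤ).tsum_eq (fun k : ℤ => ∫⁻ x in Ioc (a + k • θ) (a + (k + 1) • θ), h x)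
  simp only [Equiv.neg_apply] at e2
  rw [e2, ← lintegral_iUnion (fun k => measurableSet_Ioc) (pairwise_disjoint_Ioc_add_zsmul a θ) h,
    iUnion_Ioc_add_zsmul hθ a, Measure.restrict_univ]

private lemma disj_Icc {r : ℝ} (hr : 0 < r) (p q : ℝ) (hpq : q ≤ p + 2*r) :
    Pairwise (Function.onFun Disjoint fun k : ℤ => Icc (p - k * (4*r)) (q - k * (4*r))) := by
  intro i j hij
  rw [Function.onFun, Set.disjoint_left]
  intro x hx hx'
  rw [mem_Icc] at hx hx'
  rcases lt_or_gt_of_ne hij with hlt | hlt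
  · have hij' : (i:ℝ) + 1 ≤ (j:ℝ) := by exact_mod_cast Int.add_one_le_iff.mpr hlt
    nlinarith [hx.1, hx'.2]
  · have hij' : (j:ℝ) + 1 ≤ (i:ℝ) := by exact_mod_cast Int.add_one_le_iff.mpr hlt
    nlinarith [hx'.1, hx.2]

/-- Mass localization for the (ψ,4r)-periodization of an L¹ function ψ with
essential radius at most r. -/
theorem stmt_4 (ψ : ℝ → ℝ) (hψ : Integrable ψ) (r : ℝ) (hr : 0 < r)
    (hrad : (5/6) * (∫ x, |ψ x|) ≤ ∫ x in Icc (-r) r, |ψ x|) :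
    (∀ a : ℝ, (∫ x in Icc a (a + 4*r), |∑' k : ℤ, ψ (x - k * (4*r))|) ≤ ∫ x, |ψ x|) ∧
    ((2/3) * (∫ x, |ψ x|) ≤ ∫ x in Icc (-r) r, |∑' k : ℤ, ψ (x - k * (4*r))|) ∧
    ((∫ x in Icc r (3*r), |∑' k : ℤ, ψ (x - k * (4*r))|) ≤ (1/6) * ∫ x, |ψ x|) := by
  classical
  obtain ⟨g, hgm, hgae⟩ := hψ.aestronglyMeasurable
  have hgmeas : Measurable g := hgm.measurable
  have hgint : Integrable g := hψ.congr hgae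
  set h : ℝ → ℝ≥0∞ := fun x => (‖g x‖₊ : ℝ≥0∞) with hhdef
  have hhm : Measurable h := hgmeas.nnnorm.coe_nnreal_ennreal
  set M : ℝ≥0∞ := ∫⁻ x, h x with hMdef
  have hMne : M ≠ ⊤ := hgint.2.ne
  set G : ℝ → ℝ := fun x => ∑' k : ℤ, g (x - k * (4*r)) with hGdef
  set S : ℝ → ℝ≥0∞ := fun x => ∑' k : ℤ, h (x - k * (4*r)) with hSdef
  have hmsub : ∀ k : ℤ, Measurable fun x : ℝ => x - (k : ℝ) * (4*r) :=
    fun k => measurable_id.sub_const _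
  have hSm : Measurable S := Measurable.ennreal_tsum fun k => hhm.comp (hmsub k)
  -- F = G a.e.
  have hFG : (fun x => ∑' k : ℤ, ψ (x - k * (4*r))) =ᵐ[volume] G := by
    have htrans : ∀ k : ℤ, (fun x : ℝ => ψ (x - k * (4*r))) =ᵐ[volume]
        (fun x => g (x - k * (4*r))) := fun k =>
      hgae.comp_tendsto (measurePreserving_sub_right volume
        ((k : ℝ) * (4*r))).quasiMeasurePreserving.tendsto_ae
    filter_upwards [ae_all_iff.2 htrans] with x hx
    exact tsum_congr fun k => hx k
  -- pointwise domination
  have hGS : ∀ x, (‖G x‖₊ : ℝ≥0∞) ≤ S x := by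
    intro x
    by_cases hs : Summable fun k : ℤ => ‖g (x - k * (4*r))‖₊
    · calc ((‖G x‖₊ : ℝ≥0∞)) ≤ ((∑' k : ℤ, ‖g (x - k * (4*r))‖₊ : ℝ≥0) : ℝ≥0∞) := by
            exact_mod_cast nnnorm_tsum_le hs
        _ = S x := ENNReal.coe_tsum hs
    · have : S x = ⊤ := by
        by_contra hne
        exact hs (ENNReal.tsum_coe_ne_top_iff_summable.1 hne)
      simp [this]
  -- splitting of set lintegrals of S
  have hSsplit : ∀ b₁ b₂ : ℝ, (∫⁻ x in Icc b₁ b₂, S x)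
      = ∑' k : ℤ, ∫⁻ x in Icc (b₁ - k * (4*r)) (b₂ - k * (4*r)), h x := by
    intro b₁ b₂
    simp only [hSdef]
    rw [lintegral_tsum (f := fun (k : ℤ) (x : ℝ) => h (x - (k:ℝ) * (4*r)))
      (fun k => (hhm.comp (hmsub k)).aemeasurable)]
    exact tsum_congr fun k => shift_lintegral h _ _ _
  have hSfund : ∀ a : ℝ, (∫⁻ x in Icc a (a + 4*r), S x) = M := by
    intro a
    rw [hSsplit a (a + 4*r)]
    exact tile_lintegral h hhm (show (0:ℝ) < 4*r by linarith) a
  -- measurable a.e.-representative of G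
  set P : ℝ → ℝ≥0∞ := fun x => ∑' k : ℤ, ENNReal.ofReal (g (x - k * (4*r))) with hPdef
  set Q : ℝ → ℝ≥0∞ := fun x => ∑' k : ℤ, ENNReal.ofReal (-g (x - k * (4*r))) with hQdef
  have hPm : Measurable P := Measurable.ennreal_tsum fun k =>
    ENNReal.measurable_ofReal.comp (hgmeas.comp (hmsub k))
  have hQm : Measurable Q := Measurable.ennreal_tsum fun k =>
    ENNReal.measurable_ofReal.comp ((hgmeas.comp (hmsub k)).neg)
  set G' : ℝ → ℝ := fun x => (P x).toReal - (Q x).toReal with hG'def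
  have hG'm : Measurable G' := (hPm.ennreal_toReal).sub (hQm.ennreal_toReal)
  have hsumm : ∀ x : ℝ, S x ≠ ⊤ → Summable fun k : ℤ => ‖g (x - k * (4*r))‖ := by
    intro x hx
    have hs : Summable fun k : ℤ => ‖g (x - k * (4*r))‖₊ :=
      ENNReal.tsum_coe_ne_top_iff_summable.1 hx
    simpa [coe_nnnorm] using NNReal.summable_coe.2 hs
  have hGG' : ∀ x : ℝ, S x ≠ ⊤ → G x = G' x := by
    intro x hx
    have hR := hsumm x hx
    have hps : Summable fun k : ℤ => max (g (x - k * (4*r))) 0 := by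
      refine Summable.of_norm_bounded hR fun k => ?_
      rw [Real.norm_eq_abs, abs_of_nonneg (le_max_right _ _)]
      exact max_le (le_abs_self _) (abs_nonneg _)
    have hqs : Summable fun k : ℤ => max (-g (x - k * (4*r))) 0 := by
      refine Summable.of_norm_bounded hR fun k => ?_
      rw [Real.norm_eq_abs, abs_of_nonneg (le_max_right _ _)]
      exact max_le ((neg_le_abs _)) (abs_nonneg _)
    have hP : (P x).toReal = ∑' k : ℤ, max (g (x - k * (4*r))) 0 := by
      have e : P x = ENNReal.ofReal (∑' k : ℤ, max (g (x - k * (4*r))) 0) := by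
        rw [ENNReal.ofReal_tsum_of_nonneg (fun k => le_max_right _ _) hps]
        refine tsum_congr fun k => ?_
        rcases le_total (g (x - k * (4*r))) 0 with h0 | h0
        · rw [max_eq_right h0, ENNReal.ofReal_of_nonpos h0, ENNReal.ofReal_zero]
        · rw [max_eq_left h0]
      rw [e, ENNReal.toReal_ofReal (tsum_nonneg fun k => le_max_right _ _)]
    have hQ : (Q x).toReal = ∑' k : ℤ, max (-g (x - k * (4*r))) 0 := by
      have e : Q x = ENNReal.ofReal (∑' k : ℤ, max (-g (x - k * (4*r))) 0) := by
        rw [ENNReal.ofReal_tsum_of_nonneg (fun k => le_max_right _ _) hqs]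
        refine tsum_congr fun k => ?_
        rcases le_total (-g (x - k * (4*r))) 0 with h0 | h0
        · rw [max_eq_right h0, ENNReal.ofReal_of_nonpos h0, ENNReal.ofReal_zero]
        · rw [max_eq_left h0]
      rw [e, ENNReal.toReal_ofReal (tsum_nonneg fun k => le_max_right _ _)]
    have : G x = ∑' k : ℤ, (max (g (x - k * (4*r))) 0 - max (-g (x - k * (4*r))) 0) := by
      refine tsum_congr fun k => ?_
      rcases le_total (g (x - k * (4*r))) 0 with h0 | h0
      · rw [max_eq_right h0, max_eq_left (by linarith)]; ring
      · rw [max_eq_left h0, max_eq_right (by linarith)]; ring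
    rw [this, Summable.tsum_sub hps hqs, ← hP, ← hQ]
  -- a.e. finiteness of S on sets of finite S-lintegral
  have hfinset : ∀ s : Set ℝ, (∫⁻ x in s, S x) ≠ ⊤ → (∀ᵐ x ∂volume.restrict s, S x ≠ ⊤) :=
    fun s hs => (ae_lt_top hSm hs).mono fun x hx => hx.ne
  have key : ∀ b₁ b₂ : ℝ, (∫⁻ x in Icc b₁ b₂, S x) ≠ ⊤ →
      (∫ x in Icc b₁ b₂, |∑' k : ℤ, ψ (x - k * (4*r))|)
        = (∫⁻ x in Icc b₁ b₂, (‖G x‖₊ : ℝ≥0∞)).toReal := by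
    intro b₁ b₂ hfin
    have hae : G =ᵐ[volume.restrict (Icc b₁ b₂)] G' :=
      (hfinset _ hfin).mono fun x hx => hGG' x hx
    have hGsm : AEStronglyMeasurable G (volume.restrict (Icc b₁ b₂)) :=
      ⟨G', hG'm.stronglyMeasurable, hae⟩
    have h1 : (∫ x in Icc b₁ b₂, |∑' k : ℤ, ψ (x - k * (4*r))|)
        = ∫ x in Icc b₁ b₂, ‖G x‖ := by
      refine integral_congr_ae ?_
      filter_upwards [ae_restrict_of_ae hFG] with x hx
      rw [Real.norm_eq_abs, hx]
    rw [h1]; exact integral_norm_eq_lintegral_enorm hGsm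
  -- real-valued conversions
  have hm_eq : ∫ x, |ψ x| = M.toReal := by
    have e : ∫ x, |ψ x| = ∫ x, ‖g x‖ :=
      integral_congr_ae (hgae.mono fun x hx => by simp only [Real.norm_eq_abs, hx])
    rw [e]; exact integral_norm_eq_lintegral_enorm hgm.aestronglyMeasurable
  set C : ℝ≥0∞ := ∫⁻ x in Icc (-r) r, h x with hCdef
  have hCM : C ≤ M := by
    rw [hMdef]
    exact setLIntegral_le_lintegral _ _
  have hCne : C ≠ ⊤ := (lt_of_le_of_lt hCM hMne.lt_top).ne
  have hc_eq : ∫ x in Icc (-r) r, |ψ x| = C.toReal := by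
    have e : ∫ x in Icc (-r) r, |ψ x| = ∫ x in Icc (-r) r, ‖g x‖ :=
      integral_congr_ae ((ae_restrict_of_ae hgae).mono fun x hx => by
        simp only [Real.norm_eq_abs, hx])
    rw [e]; exact integral_norm_eq_lintegral_enorm (hgm.aestronglyMeasurable.restrict)
  rw [hm_eq, hc_eq] at hrad
  have hMC : M - C ≠ ⊤ := by
    exact (lt_of_le_of_lt (tsub_le_self) hMne.lt_top).ne
  have hsubI : Icc (-r) r ⊆ Icc (-r) (-r + 4*r) := Icc_subset_Icc le_rfl (by linarith)
  have hsubI' : Icc r (3*r) ⊆ Icc (-r) (-r + 4*r) := Icc_subset_Icc (by linarith) (by linarith)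
  have hfinI : (∫⁻ x in Icc (-r) r, S x) ≠ ⊤ :=
    (lt_of_le_of_lt (lintegral_mono_set hsubI) (by rw [hSfund (-r)]; exact hMne.lt_top)).ne
  have hfinI' : (∫⁻ x in Icc r (3*r), S x) ≠ ⊤ :=
    (lt_of_le_of_lt (lintegral_mono_set hsubI') (by rw [hSfund (-r)]; exact hMne.lt_top)).ne
  have hIoo : (∫⁻ x in Ioo (-r) r, h x) = C := by
    rw [hCdef, Measure.restrict_congr_set Ioo_ae_eq_Icc]
  have hcompl_Icc : (∫⁻ x in (Icc (-r) r)ᶜ, h x) = M - C :=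
    ENNReal.eq_sub_of_add_eq hCne
      (by rw [add_comm]; exact lintegral_add_compl h measurableSet_Icc)
  have hcompl_Ioo : (∫⁻ x in (Ioo (-r) r)ᶜ, h x) = M - C :=
    ENNReal.eq_sub_of_add_eq hCne
      (by rw [← hIoo, add_comm]; exact lintegral_add_compl h measurableSet_Ioo)
  set K : Set ℤ := ({0} : Set ℤ)ᶜ with hKdef
  -- tail bound for part 2
  have htail_le : (∑' k : K, ∫⁻ x in Icc (-r - (k:ℤ) * (4*r)) (r - (k:ℤ) * (4*r)), h x)
      ≤ M - C := by
    have hd : Pairwise (Function.onFun Disjoint fun k : K =>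
        Icc (-r - (k:ℤ) * (4*r)) (r - (k:ℤ) * (4*r))) :=
      fun i j hij => disj_Icc hr (-r) r (by linarith) (Subtype.coe_injective.ne hij)
    rw [← lintegral_iUnion
      (s := fun k : K => Icc (-r - (k:ℤ) * (4*r)) (r - (k:ℤ) * (4*r)))
      (fun k => measurableSet_Icc) hd h, ← hcompl_Icc]
    refine lintegral_mono_set (iUnion_subset fun k => ?_)
    intro x hx
    rw [mem_Icc] at hx
    have hk0 : (k : ℤ) ≠ 0 := k.2
    simp only [mem_compl_iff, mem_Icc, not_and, not_le]
    intro h1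
    rcases hk0.lt_or_gt with hneg | hpos
    · have hk1 : ((k:ℤ):ℝ) ≤ -1 := by exact_mod_cast (by omega : (k:ℤ) ≤ -1)
      nlinarith [hx.1]
    · have hk1 : (1:ℝ) ≤ ((k:ℤ):ℝ) := by exact_mod_cast hpos
      nlinarith [hx.2]
  -- pointwise lower splitting
  have hpt : ∀ x : ℝ, S x ≠ ⊤ →
      h x ≤ (‖G x‖₊ : ℝ≥0∞) + ∑' k : K, h (x - (k : ℤ) * (4*r)) := by
    intro x hx
    have hR := hsumm x hx
    have hgsum : Summable fun k : ℤ => g (x - k * (4*r)) := hR.of_norm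
    have hRsub : Summable fun k : K => ‖g (x - (k:ℤ) * (4*r))‖ := hR.subtype K
    have hsplit : g x + (∑' k : K, g (x - (k:ℤ) * (4*r))) = G x := by
      have h0 : (∑' k : ({0} : Set ℤ), g (x - (k:ℤ) * (4*r))) = g x := by
        rw [tsum_singleton (0:ℤ) (fun k : ℤ => g (x - k * (4*r)))]
        norm_num
      calc g x + (∑' k : K, g (x - (k:ℤ) * (4*r)))
          = (∑' k : ({0} : Set ℤ), g (x - (k:ℤ) * (4*r)))
            + ∑' k : K, g (x - (k:ℤ) * (4*r)) := by rw [h0]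
        _ = G x := Summable.tsum_add_tsum_compl (hgsum.subtype _) (hgsum.subtype _)
    have habs : |g x| ≤ |G x| + ∑' k : K, ‖g (x - (k:ℤ) * (4*r))‖ := by
      have e : g x = G x - ∑' k : K, g (x - (k:ℤ) * (4*r)) := by linarith [hsplit]
      have h1 : |g x| ≤ |G x| + |∑' k : K, g (x - (k:ℤ) * (4*r))| := by
        rw [e]
        simp only [← Real.norm_eq_abs]
        exact norm_sub_le _ _
      exact h1.trans (add_le_add le_rfl (by
        simpa only [Real.norm_eq_abs] using norm_tsum_le_tsum_norm hRsub))
    have hofreal : ENNReal.ofReal (∑' k : K, ‖g (x - (k:ℤ) * (4*r))‖)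
        = ∑' k : K, h (x - (k:ℤ) * (4*r)) := by
      rw [ENNReal.ofReal_tsum_of_nonneg (fun k => norm_nonneg _) hRsub]
      exact tsum_congr fun k => ofReal_norm _
    calc h x = ENNReal.ofReal ‖g x‖ := (ofReal_norm (g x)).symm
      _ ≤ ENNReal.ofReal (|G x| + ∑' k : K, ‖g (x - (k:ℤ) * (4*r))‖) := by
          refine ENNReal.ofReal_le_ofReal ?_
          rw [Real.norm_eq_abs]; exact habs
      _ = ENNReal.ofReal |G x| + ENNReal.ofReal (∑' k : K, ‖g (x - (k:ℤ) * (4*r))‖) :=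
          ENNReal.ofReal_add (abs_nonneg _) (tsum_nonneg fun k => norm_nonneg _)
      _ = (‖G x‖₊ : ℝ≥0∞) + ∑' k : K, h (x - (k:ℤ) * (4*r)) := by
          rw [hofreal, ← Real.norm_eq_abs, ofReal_norm, enorm_eq_nnnorm]
  -- bound for ∫⁻ ‖G‖₊ on Icc (-r) r
  have hAM : (∫⁻ x in Icc (-r) r, (‖G x‖₊ : ℝ≥0∞)) ≤ M := by
    calc (∫⁻ x in Icc (-r) r, (‖G x‖₊ : ℝ≥0∞))
        ≤ ∫⁻ x in Icc (-r) r, S x := lintegral_mono fun x => hGS x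
      _ ≤ ∫⁻ x in Icc (-r) (-r + 4*r), S x := lintegral_mono_set hsubI
      _ = M := hSfund (-r)
  have hAne : (∫⁻ x in Icc (-r) r, (‖G x‖₊ : ℝ≥0∞)) ≠ ⊤ :=
    (lt_of_le_of_lt hAM hMne.lt_top).ne
  have haeG : AEMeasurable (fun x => (‖G x‖₊ : ℝ≥0∞)) (volume.restrict (Icc (-r) r)) :=
    (hG'm.nnnorm.coe_nnreal_ennreal).aemeasurable.congr
      ((hfinset _ hfinI).mono fun x hx => by simp only [hGG' x hx])
  have hkey2 : C ≤ (∫⁻ x in Icc (-r) r, (‖G x‖₊ : ℝ≥0∞)) + (M - C) := by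
    calc C ≤ ∫⁻ x in Icc (-r) r,
          ((‖G x‖₊ : ℝ≥0∞) + ∑' k : K, h (x - (k:ℤ) * (4*r))) :=
        lintegral_mono_ae ((hfinset _ hfinI).mono fun x hx => hpt x hx)
      _ = (∫⁻ x in Icc (-r) r, (‖G x‖₊ : ℝ≥0∞))
          + ∫⁻ x in Icc (-r) r, (∑' k : K, h (x - (k:ℤ) * (4*r))) :=
        lintegral_add_left' haeG _
      _ ≤ (∫⁻ x in Icc (-r) r, (‖G x‖₊ : ℝ≥0∞)) + (M - C) := by
          refine add_le_add le_rfl ?_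
          rw [lintegral_tsum (f := fun (k : K) (x : ℝ) => h (x - (k:ℤ) * (4*r)))
            (fun k => (hhm.comp (hmsub (k:ℤ))).aemeasurable)]
          refine le_trans (le_of_eq (tsum_congr fun k => shift_lintegral h _ _ _)) htail_le
  -- tail bound for part 3
  have htail3 : (∑' k : ℤ, ∫⁻ x in Icc (r - k * (4*r)) (3*r - k * (4*r)), h x) ≤ M - C := by
    rw [← lintegral_iUnion (fun k => measurableSet_Icc) (disj_Icc hr r (3*r) (by linarith)) h,
      ← hcompl_Ioo]
    refine lintegral_mono_set (iUnion_subset fun k => ?_)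
    intro x hx
    rw [mem_Icc] at hx
    simp only [mem_compl_iff, mem_Ioo, not_and, not_lt]
    intro h1
    rcases le_or_gt (k : ℤ) 0 with hk | hk
    · have hk1 : ((k:ℤ):ℝ) ≤ 0 := by exact_mod_cast hk
      nlinarith [hx.1]
    · have hk1 : (1:ℝ) ≤ ((k:ℤ):ℝ) := by exact_mod_cast hk
      nlinarith [hx.2]
  -- conclusion
  refine ⟨?_, ?_, ?_⟩
  · intro a
    have hfin : (∫⁻ x in Icc a (a + 4*r), S x) ≠ ⊤ := by rw [hSfund a]; exact hMne
    rw [key a (a + 4*r) hfin, hm_eq]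
    refine ENNReal.toReal_mono hMne ?_
    calc (∫⁻ x in Icc a (a + 4*r), (‖G x‖₊ : ℝ≥0∞))
        ≤ ∫⁻ x in Icc a (a + 4*r), S x := lintegral_mono fun x => hGS x
      _ = M := hSfund a
  · rw [hm_eq, key (-r) r hfinI]
    have h2 := ENNReal.toReal_mono (ENNReal.add_ne_top.2 ⟨hAne, hMC⟩) hkey2
    rw [ENNReal.toReal_add hAne hMC, ENNReal.toReal_sub_of_le hCM hMne] at h2
    have hCMr : C.toReal ≤ M.toReal := ENNReal.toReal_mono hMne hCM
    linarith [h2, hrad]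
  · rw [key r (3*r) hfinI', hm_eq]
    have hb : (∫⁻ x in Icc r (3*r), (‖G x‖₊ : ℝ≥0∞)) ≤ M - C := by
      calc (∫⁻ x in Icc r (3*r), (‖G x‖₊ : ℝ≥0∞))
          ≤ ∫⁻ x in Icc r (3*r), S x := lintegral_mono fun x => hGS x
        _ = ∑' k : ℤ, ∫⁻ x in Icc (r - k * (4*r)) (3*r - k * (4*r)), h x := hSsplit r (3*r)
        _ ≤ M - C := htail3
    refine le_trans (ENNReal.toReal_mono hMC hb) ?_
    rw [ENNReal.toReal_sub_of_le hCM hMne]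
    linarith [hrad]
end

section
/- Let D be a probability distribution on a domain X, f: X → ℝ measurable, ε > 0, and h: X × ℝ → [0,1] a function such that y ↦ h(x,y) is λ-Lipschitz for each fixed x. Then |E_{x∼D}[h(x, f(x))] − ∫_ℝ E_{x∼D}[h(x,y)·χ_y(f(x))] dy| ≤ (5/3)·λ·ε, where χ_y(t) = max{0, 1/ε − (1/ε)²·|t − y|} is the ε-soft indicator. -/
open MeasureTheory Set intervalIntegral

/-- The ε-soft indicator χ_y. -/
noncomputable def softInd (ε y t : ℝ) : ℝ := max 0 (1/ε - (1/ε)^2 * |t - y|)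

section aux

variable {ε t : ℝ}

lemma softInd_nonneg (ε y t : ℝ) : 0 ≤ softInd ε y t := le_max_left _ _

lemma softInd_eq_of_le (hε : 0 < ε) {y : ℝ} (hy : |t - y| ≤ ε) :
    softInd ε y t = 1/ε - (1/ε)^2 * |t - y| := by
  apply max_eq_right
  have h1 : (1/ε)^2 * |t - y| ≤ (1/ε)^2 * ε := by
    apply mul_le_mul_of_nonneg_left hy (by positivity)
  have h2 : (1/ε)^2 * ε = 1/ε := by field_simp
  linarith

lemma softInd_eq_zero (hε : 0 < ε) {y : ℝ} (hy : ε ≤ |t - y|) :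
    softInd ε y t = 0 := by
  apply max_eq_left
  have h1 : (1/ε)^2 * ε ≤ (1/ε)^2 * |t - y| := by
    apply mul_le_mul_of_nonneg_left hy (by positivity)
  have h2 : (1/ε)^2 * ε = 1/ε := by field_simp
  linarith

lemma softInd_continuous (ε t : ℝ) : Continuous (fun y => softInd ε y t) := by
  unfold softInd; fun_prop

lemma softInd_support (hε : 0 < ε) :
    Function.support (fun y => softInd ε y t) ⊆ Ioc (t - ε) (t + ε) := by
  intro y hy
  by_contra hmem
  apply hy
  have : ε ≤ |t - y| := by
    simp only [mem_Ioc, not_and_or, not_lt, not_le] at hmem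
    rcases hmem with h1 | h1
    · rw [abs_of_nonneg (by linarith)]; linarith
    · rw [abs_of_nonpos (by linarith)]; linarith
  exact softInd_eq_zero hε this

/-- left half -/
lemma softInd_int_left (hε : 0 < ε) :
    ∫ y in (t - ε)..t, softInd ε y t = 1/2 := by
  have hcongr : ∀ y ∈ Set.uIcc (t - ε) t, softInd ε y t = 1/ε - (1/ε)^2 * (t - y) := by
    intro y hy
    rw [Set.uIcc_of_le (by linarith)] at hy
    obtain ⟨h1, h2⟩ := hy
    rw [softInd_eq_of_le hε (by rw [abs_of_nonneg (by linarith)]; linarith),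
      abs_of_nonneg (by linarith)]
  rw [intervalIntegral.integral_congr hcongr]
  have h1 : IntervalIntegrable (fun _ : ℝ => 1/ε) volume (t - ε) t :=
    intervalIntegrable_const
  have h2 : IntervalIntegrable (fun y : ℝ => (1/ε)^2 * (t - y)) volume (t - ε) t := by
    apply Continuous.intervalIntegrable; fun_prop
  rw [intervalIntegral.integral_sub h1 h2, intervalIntegral.integral_const,
    intervalIntegral.integral_const_mul]
  have h3 : ∫ y in (t - ε)..t, (t - y) = ε^2/2 := by
    rw [intervalIntegral.integral_comp_sub_left (fun u => u) t]
    simp only [integral_id]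
    ring
  rw [h3]
  field_simp
  ring_nf
  rw [mul_inv_cancel₀ hε.ne']
  norm_num

/-- right half -/
lemma softInd_int_right (hε : 0 < ε) :
    ∫ y in t..(t + ε), softInd ε y t = 1/2 := by
  have hcongr : ∀ y ∈ Set.uIcc t (t + ε), softInd ε y t = 1/ε - (1/ε)^2 * (y - t) := by
    intro y hy
    rw [Set.uIcc_of_le (by linarith)] at hy
    obtain ⟨h1, h2⟩ := hy
    rw [softInd_eq_of_le hε (by rw [abs_of_nonpos (by linarith)]; linarith),
      abs_of_nonpos (by linarith)]
    ring_nf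
  rw [intervalIntegral.integral_congr hcongr]
  have h1 : IntervalIntegrable (fun _ : ℝ => 1/ε) volume t (t + ε) :=
    intervalIntegrable_const
  have h2 : IntervalIntegrable (fun y : ℝ => (1/ε)^2 * (y - t)) volume t (t + ε) := by
    apply Continuous.intervalIntegrable; fun_prop
  rw [intervalIntegral.integral_sub h1 h2, intervalIntegral.integral_const,
    intervalIntegral.integral_const_mul]
  have h3 : ∫ y in t..(t + ε), (y - t) = ε^2/2 := by
    rw [show (fun y : ℝ => y - t) = (fun y => (fun u : ℝ => u) (y - t)) from rfl,
      intervalIntegral.integral_comp_sub_right (fun u => u) t]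
    simp only [integral_id]
    ring
  rw [h3]
  field_simp
  ring_nf
  rw [mul_inv_cancel₀ hε.ne']
  norm_num

lemma softInd_integrable (hε : 0 < ε) (t : ℝ) :
    Integrable (fun y => softInd ε y t) volume := by
  apply Continuous.integrable_of_hasCompactSupport (softInd_continuous ε t)
  apply HasCompactSupport.of_support_subset_isCompact (isCompact_Icc (a := t - ε) (b := t + ε))
  exact (softInd_support hε).trans Ioc_subset_Icc_self

lemma softInd_integral_one (hε : 0 < ε) (t : ℝ) :
    ∫ y, softInd ε y t = 1 := by
  rw [← intervalIntegral.integral_eq_integral_of_support_subset (softInd_support hε)]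
  rw [← intervalIntegral.integral_add_adjacent_intervals
    (b := t) ?_ ?_]
  · rw [softInd_int_left hε, softInd_int_right hε]; norm_num
  · exact ((softInd_continuous ε t)).intervalIntegrable _ _
  · exact ((softInd_continuous ε t)).intervalIntegrable _ _

lemma softInd_abs_support (hε : 0 < ε) :
    Function.support (fun y => |t - y| * softInd ε y t) ⊆ Ioc (t - ε) (t + ε) := by
  intro y hy
  apply softInd_support hε
  intro hzero
  apply hy
  simp [hzero]

lemma softInd_abs_int_left (hε : 0 < ε) :
    ∫ y in (t - ε)..t, |t - y| * softInd ε y t = ε/6 := by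
  have hcongr : ∀ y ∈ Set.uIcc (t - ε) t,
      |t - y| * softInd ε y t = (t - y) * (1/ε) - (1/ε)^2 * (t - y)^2 := by
    intro y hy
    rw [Set.uIcc_of_le (by linarith)] at hy
    obtain ⟨h1, h2⟩ := hy
    rw [softInd_eq_of_le hε (by rw [abs_of_nonneg (by linarith)]; linarith),
      abs_of_nonneg (by linarith)]
    ring
  rw [intervalIntegral.integral_congr hcongr]
  have h1 : IntervalIntegrable (fun y : ℝ => (t - y) * (1/ε)) volume (t - ε) t := by
    apply Continuous.intervalIntegrable; fun_prop
  have h2 : IntervalIntegrable (fun y : ℝ => (1/ε)^2 * (t - y)^2) volume (t - ε) t := by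
    apply Continuous.intervalIntegrable; fun_prop
  rw [intervalIntegral.integral_sub h1 h2, intervalIntegral.integral_mul_const,
    intervalIntegral.integral_const_mul]
  have h3 : ∫ y in (t - ε)..t, (t - y) = ε^2/2 := by
    rw [intervalIntegral.integral_comp_sub_left (fun u => u) t]
    simp only [integral_id]
    ring
  have h4 : ∫ y in (t - ε)..t, (t - y)^2 = ε^3/3 := by
    rw [intervalIntegral.integral_comp_sub_left (fun u => u^2) t]
    simp only [integral_pow]
    norm_num
  rw [h3, h4]
  field_simp
  ring

lemma softInd_abs_int_right (hε : 0 < ε) :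
    ∫ y in t..(t + ε), |t - y| * softInd ε y t = ε/6 := by
  have hcongr : ∀ y ∈ Set.uIcc t (t + ε),
      |t - y| * softInd ε y t = (y - t) * (1/ε) - (1/ε)^2 * (y - t)^2 := by
    intro y hy
    rw [Set.uIcc_of_le (by linarith)] at hy
    obtain ⟨h1, h2⟩ := hy
    rw [softInd_eq_of_le hε (by rw [abs_of_nonpos (by linarith)]; linarith),
      abs_of_nonpos (by linarith)]
    ring
  rw [intervalIntegral.integral_congr hcongr]
  have h1 : IntervalIntegrable (fun y : ℝ => (y - t) * (1/ε)) volume t (t + ε) := by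
    apply Continuous.intervalIntegrable; fun_prop
  have h2 : IntervalIntegrable (fun y : ℝ => (1/ε)^2 * (y - t)^2) volume t (t + ε) := by
    apply Continuous.intervalIntegrable; fun_prop
  rw [intervalIntegral.integral_sub h1 h2, intervalIntegral.integral_mul_const,
    intervalIntegral.integral_const_mul]
  have h3 : ∫ y in t..(t + ε), (y - t) = ε^2/2 := by
    rw [show (fun y : ℝ => y - t) = (fun y => (fun u : ℝ => u) (y - t)) from rfl,
      intervalIntegral.integral_comp_sub_right (fun u => u) t]
    simp only [integral_id]
    ring
  have h4 : ∫ y in t..(t + ε), (y - t)^2 = ε^3/3 := by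
    rw [show (fun y : ℝ => (y - t)^2) = (fun y => (fun u : ℝ => u^2) (y - t)) from rfl,
      intervalIntegral.integral_comp_sub_right (fun u => u^2) t]
    simp only [integral_pow]
    norm_num
  rw [h3, h4]
  field_simp
  ring

lemma softInd_abs_continuous (ε t : ℝ) :
    Continuous (fun y => |t - y| * softInd ε y t) := by
  apply Continuous.mul _ (softInd_continuous ε t)
  fun_prop

lemma softInd_abs_integrable (hε : 0 < ε) (t : ℝ) :
    Integrable (fun y => |t - y| * softInd ε y t) volume := by
  apply Continuous.integrable_of_hasCompactSupport (softInd_abs_continuous ε t)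
  apply HasCompactSupport.of_support_subset_isCompact (isCompact_Icc (a := t - ε) (b := t + ε))
  exact (softInd_abs_support hε).trans Ioc_subset_Icc_self

lemma softInd_abs_integral (hε : 0 < ε) (t : ℝ) :
    ∫ y, |t - y| * softInd ε y t = ε/3 := by
  rw [← intervalIntegral.integral_eq_integral_of_support_subset (softInd_abs_support hε)]
  rw [← intervalIntegral.integral_add_adjacent_intervals (b := t) ?_ ?_]
  · rw [softInd_abs_int_left hε, softInd_abs_int_right hε]; ring
  · exact (softInd_abs_continuous ε t).intervalIntegrable _ _
  · exact (softInd_abs_continuous ε t).intervalIntegrable _ _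

end aux

/-- Soft-indicator approximation of the expectation of a Lipschitz-in-y query. -/
theorem stmt_11 {X : Type*} [MeasurableSpace X] (μ : Measure X)
    [IsProbabilityMeasure μ] (f : X → ℝ) (hf : Measurable f)
    (h : X → ℝ → ℝ) (hmeas : Measurable (Function.uncurry h))
    (hrange : ∀ x y, h x y ∈ Icc (0:ℝ) 1) (lam : ℝ) (hlam : 0 ≤ lam)
    (hlip : ∀ x, LipschitzWith (Real.toNNReal lam) (h x)) (ε : ℝ) (hε : 0 < ε) :
    |(∫ x, h x (f x) ∂μ) - ∫ y : ℝ, (∫ x, h x y * softInd ε y (f x) ∂μ)| ≤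
      (5/3) * lam * ε := by
  -- continuity of h x
  have hcont : ∀ x, Continuous (h x) := fun x => (hlip x).continuous
  -- per-x integrability in y
  have hxint : ∀ x : X, Integrable (fun y => h x y * softInd ε y (f x)) volume := by
    intro x
    apply Continuous.integrable_of_hasCompactSupport
      ((hcont x).mul (softInd_continuous ε (f x)))
    apply HasCompactSupport.of_support_subset_isCompact
      (isCompact_Icc (a := f x - ε) (b := f x + ε))
    refine subset_trans ?_ ((softInd_support hε).trans Ioc_subset_Icc_self)
    intro y hy hzero
    apply hy
    simp [hzero]
  -- per-x bound
  have hxbd : ∀ x : X, |h x (f x) - ∫ y, h x y * softInd ε y (f x)| ≤ lam * (ε/3) := by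
    intro x
    set t := f x with ht
    have h1 : h x t = ∫ y, h x t * softInd ε y t := by
      rw [MeasureTheory.integral_const_mul, softInd_integral_one hε, mul_one]
    have hconstint : Integrable (fun y => h x t * softInd ε y t) volume :=
      (softInd_integrable hε t).const_mul _
    rw [h1, ← integral_sub hconstint (hxint x)]
    have h2 : ∀ y, |h x t * softInd ε y t - h x y * softInd ε y t| ≤
        lam * (|t - y| * softInd ε y t) := by
      intro y
      rw [← sub_mul, abs_mul, abs_of_nonneg (softInd_nonneg ε y t), ← mul_assoc]
      apply mul_le_mul_of_nonneg_right _ (softInd_nonneg ε y t)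
      have := (hlip x).dist_le_mul t y
      rw [Real.dist_eq, Real.dist_eq] at this
      calc |h x t - h x y| ≤ (Real.toNNReal lam : ℝ) * |t - y| := this
        _ = lam * |t - y| := by rw [Real.coe_toNNReal lam hlam]
    calc |∫ y, (h x t * softInd ε y t - h x y * softInd ε y t)|
        ≤ ∫ y, |h x t * softInd ε y t - h x y * softInd ε y t| := by
          rw [← Real.norm_eq_abs]
          refine (MeasureTheory.norm_integral_le_integral_norm _).trans_eq ?_
          simp [Real.norm_eq_abs]
      _ ≤ ∫ y, lam * (|t - y| * softInd ε y t) := by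
          apply integral_mono _ ((softInd_abs_integrable hε t).const_mul lam) h2
          exact (hconstint.sub (hxint x)).abs
      _ = lam * (ε/3) := by rw [MeasureTheory.integral_const_mul, softInd_abs_integral hε t]
  -- joint measurability
  have hFmeas : Measurable (fun p : X × ℝ => h p.1 p.2 * softInd ε p.2 (f p.1)) := by
    apply hmeas.mul
    unfold softInd
    apply measurable_const.max
    apply measurable_const.sub
    apply measurable_const.mul
    exact ((hf.comp measurable_fst).sub measurable_snd).abs
  -- integrability on product
  have hFint : Integrable (fun p : X × ℝ => h p.1 p.2 * softInd ε p.2 (f p.1))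
      (μ.prod volume) := by
    rw [integrable_prod_iff hFmeas.aestronglyMeasurable]
    constructor
    · exact Filter.Eventually.of_forall fun x => hxint x
    · have hnn : ∀ x y, 0 ≤ h x y * softInd ε y (f x) := fun x y =>
        mul_nonneg (hrange x y).1 (softInd_nonneg _ _ _)
      have hb : ∀ x : X, ∫ y, ‖h x y * softInd ε y (f x)‖ ≤ 1 := by
        intro x
        have : ∀ y, ‖h x y * softInd ε y (f x)‖ ≤ softInd ε y (f x) := by
          intro y
          rw [Real.norm_eq_abs, abs_of_nonneg (hnn x y)]
          calc h x y * softInd ε y (f x) ≤ 1 * softInd ε y (f x) :=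
            mul_le_mul_of_nonneg_right (hrange x y).2 (softInd_nonneg _ _ _)
          _ = softInd ε y (f x) := one_mul _
        calc ∫ y, ‖h x y * softInd ε y (f x)‖
            ≤ ∫ y, softInd ε y (f x) :=
              integral_mono (hxint x).norm (softInd_integrable hε (f x)) this
          _ = 1 := softInd_integral_one hε (f x)
      apply Integrable.mono' (integrable_const (1:ℝ))
      · exact (hFmeas.norm.stronglyMeasurable.integral_prod_right').aestronglyMeasurable
      · apply Filter.Eventually.of_forall
        intro x
        rw [Real.norm_eq_abs, abs_of_nonneg (integral_nonneg fun y => norm_nonneg _)]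
        exact hb x
  -- swap
  have hswap : ∫ y : ℝ, (∫ x, h x y * softInd ε y (f x) ∂μ) =
      ∫ x, (∫ y, h x y * softInd ε y (f x)) ∂μ := by
    exact (integral_integral_swap hFint).symm
  rw [hswap]
  -- integrability of the two x-integrands
  have hint1 : Integrable (fun x => h x (f x)) μ := by
    apply Integrable.mono' (integrable_const (1:ℝ))
    · exact (hmeas.comp (measurable_id.prodMk hf)).aestronglyMeasurable
    · apply Filter.Eventually.of_forall
      intro x
      rw [Real.norm_eq_abs, abs_of_nonneg (hrange x (f x)).1]
      exact (hrange x (f x)).2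
  have hint2 : Integrable (fun x => ∫ y, h x y * softInd ε y (f x)) μ :=
    hFint.integral_prod_left
  rw [← integral_sub hint1 hint2]
  calc |∫ x, (h x (f x) - ∫ y, h x y * softInd ε y (f x)) ∂μ|
      ≤ lam * (ε/3) * (μ Set.univ).toReal := by
        rw [← Real.norm_eq_abs]
        apply MeasureTheory.norm_integral_le_of_norm_le_const
        apply Filter.Eventually.of_forall
        intro x
        rw [Real.norm_eq_abs]
        exact hxbd x
    _ = lam * (ε/3) := by simp
    _ ≤ (5/3) * lam * ε := by nlinarith
end
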